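/- Let f : ℕ² → ℂ be positive semidefinite on the semigroup (ℕ², +) with involution (m,n)* = (n,m), and suppose there exist C > 0 and r > 0 with f(n,n) ≤ C r^{2n} for all n ∈ ℕ. Then R_{(m,n)} := sup_{k≥1}(f(k(m+n), k(m+n)))^{1/(2k)} ≤ r^{m+n} for every (m,n), and in particular |f(m,n)| ≤ C^{1/2} r^{m+n} (up to the normalization f(0,0)), so f is exponentially bounded with bound r^{m+n}. -/

import Mathlib

theorem stmt_18
    (f : ℕ × ℕ → ℂ) (hnorm : f (0, 0) = 1)
    (hpsd : ∀ (n : ℕ) (s : Fin n → ℕ × ℕ) (c : Fin n → ℂ),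
      ∃ r : ℝ, 0 ≤ r ∧
        (∑ j, ∑ k, c j * (starRingEnd ℂ) (c k) *
          f ((s j).2 + (s k).1, (s j).1 + (s k).2)) = (r : ℂ))
    (C r : ℝ) (hC : 0 < C) (hr : 0 < r)
    (hbound : ∀ n : ℕ, (f (n, n)).re ≤ C * r ^ (2 * n)) :
    ∀ m n : ℕ,
      sSup {x : ℝ | ∃ k : ℕ, 1 ≤ k ∧
          x = (f (k * (m + n), k * (m + n))).re ^ (((2 * k : ℕ) : ℝ))⁻¹}
        ≤ r ^ (m + n) ∧
      ‖f (m, n)‖ ≤ Real.sqrt C * r ^ (m + n) := by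
  -- diagonal values are nonneg reals
  have hdiag : ∀ s : ℕ × ℕ, 0 ≤ (f (s.2 + s.1, s.1 + s.2)).re ∧
      (f (s.2 + s.1, s.1 + s.2)).im = 0 := by
    intro s
    obtain ⟨ρ, hρ, heq⟩ := hpsd 1 (fun _ => s) (fun _ => 1)
    simp only [Fin.sum_univ_one, one_mul, map_one] at heq
    rw [heq]
    simp [hρ]
  -- hermitian symmetry
  have hherm : ∀ s t : ℕ × ℕ,
      f (t.2 + s.1, t.1 + s.2) = (starRingEnd ℂ) (f (s.2 + t.1, s.1 + t.2)) := by
    intro s t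
    obtain ⟨ρ1, _, h1⟩ := hpsd 2 ![s, t] ![1, 1]
    obtain ⟨ρ2, _, h2⟩ := hpsd 2 ![s, t] ![1, Complex.I]
    simp only [Fin.sum_univ_two, Matrix.cons_val_zero, Matrix.cons_val_one, Matrix.head_cons,
      map_one, one_mul, mul_one, Complex.conj_I] at h1 h2
    have ha := (hdiag s).2
    have hd := (hdiag t).2
    set b := f (s.2 + t.1, s.1 + t.2)
    set e := f (t.2 + s.1, t.1 + s.2)
    have i1 : (f (s.2 + s.1, s.1 + s.2) + b + (e + f (t.2 + t.1, t.1 + t.2))).im = 0 := by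
      rw [h1]; simp
    have i2 : (f (s.2 + s.1, s.1 + s.2) + (-Complex.I) * b +
        (Complex.I * e + Complex.I * (-Complex.I) * f (t.2 + t.1, t.1 + t.2))).im = 0 := by
      rw [h2]; simp
    simp only [Complex.add_im, Complex.mul_im, Complex.neg_im, Complex.neg_re, Complex.I_re,
      Complex.I_im, Complex.mul_re, ha, hd] at i1 i2
    apply Complex.ext <;> simp only [Complex.conj_re, Complex.conj_im] <;> linarith
  -- Cauchy-Schwarz
  have hCS : ∀ s t : ℕ × ℕ, Complex.normSq (f (s.2 + t.1, s.1 + t.2)) ≤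
      (f (s.2 + s.1, s.1 + s.2)).re * (f (t.2 + t.1, t.1 + t.2)).re := by
    intro s t
    set b := f (s.2 + t.1, s.1 + t.2) with hb
    set a := (f (s.2 + s.1, s.1 + s.2)).re
    set d := (f (t.2 + t.1, t.1 + t.2)).re
    have ha0 : 0 ≤ a := (hdiag s).1
    have hd0 : 0 ≤ d := (hdiag t).1
    rcases eq_or_ne b 0 with h0 | h0
    · rw [h0]; simpa using mul_nonneg ha0 hd0
    have key : ∀ x : ℝ, 0 ≤ (Complex.normSq b * a) * (x * x) +
        (-(2 * Complex.normSq b)) * x + d := by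
      intro x
      obtain ⟨ρ, hρ, heq⟩ := hpsd 2 ![s, t] ![(x : ℂ) * (starRingEnd ℂ) b, -1]
      simp only [Fin.sum_univ_two, Matrix.cons_val_zero, Matrix.cons_val_one,
        Matrix.head_cons] at heq
      have haim := (hdiag s).2
      have hdim := (hdiag t).2
      have he : f (t.2 + s.1, t.1 + s.2) = (starRingEnd ℂ) b := hherm s t
      rw [he] at heq
      have hre : ((x : ℂ) * (starRingEnd ℂ) b * (starRingEnd ℂ) ((x : ℂ) * (starRingEnd ℂ) b) *
            f (s.2 + s.1, s.1 + s.2) +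
          (x : ℂ) * (starRingEnd ℂ) b * (starRingEnd ℂ) (-1) * b +
          (-1 * (starRingEnd ℂ) ((x : ℂ) * (starRingEnd ℂ) b) * (starRingEnd ℂ) b +
            -1 * (starRingEnd ℂ) (-1) * f (t.2 + t.1, t.1 + t.2))) =
          (((Complex.normSq b * a) * (x * x) + (-(2 * Complex.normSq b)) * x + d : ℝ) : ℂ) := by
        have hfa : f (s.2 + s.1, s.1 + s.2) = (a : ℂ) := by
          apply Complex.ext <;> simp [a, haim]
        have hfd : f (t.2 + t.1, t.1 + t.2) = (d : ℂ) := by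
          apply Complex.ext <;> simp [d, hdim]
        have hbb : b * (starRingEnd ℂ) b = (Complex.normSq b : ℂ) := Complex.mul_conj b
        have hbb' : (starRingEnd ℂ) b * b = (Complex.normSq b : ℂ) := by
          rw [mul_comm]; exact hbb
        rw [hfa, hfd]
        simp only [map_mul, Complex.conj_conj, Complex.conj_ofReal, map_neg, map_one]
        push_cast
        linear_combination ((x:ℂ)^2 * (a:ℂ) - 2*(x:ℂ)) * hbb
      rw [hre] at heq
      have := Complex.ofReal_injective heq
      rw [this]; exact hρ
    have hd2 := discrim_le_zero key
    rw [discrim] at hd2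
    nlinarith [Complex.normSq_pos.mpr h0]
  intro m n
  set N := m + n with hN
  have hdg : ∀ p : ℕ, 0 ≤ (f (p, p)).re ∧ (f (p, p)).im = 0 := by
    intro p
    have := hdiag (0, p)
    simpa using this
  have habs : ∀ p : ℕ, Complex.normSq (f (p, p)) = ((f (p, p)).re) ^ 2 := by
    intro p
    rw [Complex.normSq_apply, (hdg p).2]
    ring
  have hsq : ∀ p : ℕ, ((f (p, p)).re) ^ 2 ≤ (f (2 * p, 2 * p)).re := by
    intro p
    have h := hCS (0, 0) (p, p)
    have hnorm' : (f 0).re = 1 := by rw [← Prod.mk_zero_zero, hnorm]; simp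
    norm_num at h
    rw [hnorm, Complex.one_re, one_mul] at h
    rw [two_mul, ← habs p]
    exact h
  have hiter : ∀ k j : ℕ,
      ((f (k * N, k * N)).re) ^ (2 ^ j) ≤ (f (2 ^ j * k * N, 2 ^ j * k * N)).re := by
    intro k j
    induction j with
    | zero => simp
    | succ j ih =>
      have h1 : ((f (k * N, k * N)).re) ^ (2 ^ (j + 1)) =
          (((f (k * N, k * N)).re) ^ (2 ^ j)) ^ 2 := by
        rw [← pow_mul, pow_succ]
      rw [h1]
      calc (((f (k * N, k * N)).re) ^ (2 ^ j)) ^ 2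
          ≤ ((f (2 ^ j * k * N, 2 ^ j * k * N)).re) ^ 2 :=
            pow_le_pow_left₀ (pow_nonneg (hdg _).1 _) ih 2
        _ ≤ (f (2 * (2 ^ j * k * N), 2 * (2 ^ j * k * N))).re := hsq _
        _ = (f (2 ^ (j + 1) * k * N, 2 ^ (j + 1) * k * N)).re := by
            rw [show 2 * (2 ^ j * k * N) = 2 ^ (j + 1) * k * N by ring]
  have hkey : ∀ k : ℕ, (f (k * N, k * N)).re ≤ r ^ (2 * k * N) := by
    intro k
    by_contra hcon
    push_neg at hcon
    have hu : 0 < r ^ (2 * k * N) := pow_pos hr _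
    have hx : 1 < (f (k * N, k * N)).re / r ^ (2 * k * N) := (one_lt_div hu).mpr hcon
    obtain ⟨jn, hjn⟩ := pow_unbounded_of_one_lt C hx
    have h1 : ((f (k * N, k * N)).re / r ^ (2 * k * N)) ^ (2 ^ jn) ≤ C := by
      rw [div_pow, div_le_iff₀ (pow_pos hu _)]
      calc ((f (k * N, k * N)).re) ^ (2 ^ jn)
          ≤ (f (2 ^ jn * k * N, 2 ^ jn * k * N)).re := hiter k jn
        _ ≤ C * r ^ (2 * (2 ^ jn * k * N)) := hbound _
        _ = C * (r ^ (2 * k * N)) ^ (2 ^ jn) := by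
            rw [← pow_mul, show 2 * k * N * 2 ^ jn = 2 * (2 ^ jn * k * N) by ring]
    have h2 : ((f (k * N, k * N)).re / r ^ (2 * k * N)) ^ jn ≤
        ((f (k * N, k * N)).re / r ^ (2 * k * N)) ^ (2 ^ jn) :=
      pow_le_pow_right₀ hx.le (Nat.lt_two_pow_self (n := jn)).le
    linarith
  constructor
  · apply csSup_le
    · exact ⟨(f (1 * N, 1 * N)).re ^ (((2 * 1 : ℕ) : ℝ))⁻¹, 1, le_refl 1, rfl⟩
    · rintro x ⟨k, hk, rfl⟩
      have hk2 : (0 : ℝ) < ((2 * k : ℕ) : ℝ) := by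
        have : 0 < 2 * k := by omega
        exact_mod_cast this
      have hb : (f (k * N, k * N)).re ≤ (r ^ N) ^ (2 * k) := by
        calc (f (k * N, k * N)).re ≤ r ^ (2 * k * N) := hkey k
          _ = (r ^ N) ^ (2 * k) := by rw [← pow_mul, mul_comm N (2 * k)]
      have hmono := Real.rpow_le_rpow (hdg _).1 hb (inv_nonneg.mpr hk2.le)
      refine le_trans hmono ?_
      rw [← Real.rpow_natCast (r ^ N) (2 * k), ← Real.rpow_mul (by positivity),
        mul_inv_cancel₀ hk2.ne', Real.rpow_one]
  · have h := hCS (0, 0) (m, n)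
    have hnorm' : (f 0).re = 1 := by rw [← Prod.mk_zero_zero, hnorm]; simp
    norm_num [add_comm n m] at h
    rw [hnorm, Complex.one_re, one_mul, ← hN] at h
    have h2 : Complex.normSq (f (m, n)) ≤ C * r ^ (2 * N) :=
      le_trans h (hbound N)
    have h3 : ‖f (m, n)‖ = Real.sqrt (Complex.normSq (f (m, n))) :=
      Complex.norm_def _
    rw [h3]
    calc Real.sqrt (Complex.normSq (f (m, n))) ≤ Real.sqrt (C * r ^ (2 * N)) :=
          Real.sqrt_le_sqrt h2
      _ = Real.sqrt C * r ^ N := by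
          rw [Real.sqrt_mul hC.le, show 2 * N = N * 2 by ring, pow_mul,
            Real.sqrt_sq (pow_nonneg hr.le N)]
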